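/- The piecewise function u above is the unique minimizer of J(v) = ∫_{−1}^{1} ((1/2)(v')² + 8|v|) dx over all v ∈ H¹(−1,1) with v(−1) = −1, v(1) = 1. -/

import Mathlib

open MeasureTheory intervalIntegral Set

noncomputable def uTP (x : ℝ) : ℝ :=
  if x ≤ -(1/2) then -4*x^2 - 4*x - 1
  else if x ≤ 1/2 then 0
  else 4*x^2 - 4*x + 1

namespace TwoPhaseAux

/-- derivative of uTP, closed form -/
noncomputable def Ud (x : ℝ) : ℝ := -8 * min 0 (x + 1/2) + 8 * max 0 (x - 1/2)

/-- subgradient of |uTP| -/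
noncomputable def sTP (x : ℝ) : ℝ := if x ≤ -(1/2) then -1 else if x ≤ 1/2 then 0 else 1

lemma uTP_eq (x : ℝ) : uTP x = -4*(min 0 (x+1/2))^2 + 4*(max 0 (x-1/2))^2 := by
  unfold uTP
  split_ifs with h1 h2
  · rw [min_eq_right (by linarith), max_eq_left (by linarith)]; ring
  · rw [min_eq_left (by linarith), max_eq_left (by linarith)]; ring
  · rw [min_eq_left (by linarith), max_eq_right (by linarith)]; ring

lemma sq_max_hasDerivAt (x : ℝ) : HasDerivAt (fun y : ℝ => (max 0 y)^2) (2 * max 0 x) x := by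
  rcases lt_trichotomy x 0 with hx | hx | hx
  · have hev : (fun y : ℝ => (max 0 y)^2) =ᶠ[nhds x] fun _ => (0:ℝ) := by
      filter_upwards [Iio_mem_nhds hx] with y (hy : y < 0)
      simp [max_eq_left hy.le]
    have : HasDerivAt (fun _ : ℝ => (0:ℝ)) (2 * max 0 x) x := by
      simpa [max_eq_left hx.le] using hasDerivAt_const x (0:ℝ)
    exact this.congr_of_eventuallyEq hev
  · subst hx
    rw [hasDerivAt_iff_isLittleO]
    have : (fun y : ℝ => (max 0 y)^2) =o[nhds 0] fun y => y := by
      rw [Asymptotics.isLittleO_iff]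
      intro c hc
      filter_upwards [Metric.ball_mem_nhds (0:ℝ) hc] with y hy
      rw [mem_ball_zero_iff, Real.norm_eq_abs] at hy
      have h1 : |max 0 y| ≤ |y| := by
        rcases le_total y 0 with h | h
        · simp [max_eq_left h]
        · simp [max_eq_right h]
      rw [Real.norm_eq_abs, Real.norm_eq_abs, abs_pow]
      calc |max 0 y|^2 ≤ |y|^2 := by nlinarith [abs_nonneg (max 0 y), abs_nonneg y]
        _ ≤ c * |y| := by nlinarith [abs_nonneg y]
    simpa using this
  · have hev : (fun y : ℝ => (max 0 y)^2) =ᶠ[nhds x] fun y => y^2 := by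
      filter_upwards [Ioi_mem_nhds hx] with y (hy : 0 < y)
      simp [max_eq_right hy.le]
    have : HasDerivAt (fun y : ℝ => y^2) (2 * max 0 x) x := by
      simpa [max_eq_right hx.le, mul_comm] using hasDerivAt_pow 2 x
    exact this.congr_of_eventuallyEq hev

lemma sq_min_hasDerivAt (x : ℝ) : HasDerivAt (fun y : ℝ => (min 0 y)^2) (2 * min 0 x) x := by
  have h := (sq_max_hasDerivAt (-x)).comp x (hasDerivAt_neg x)
  have key : ∀ y : ℝ, max 0 (-y) = -(min 0 y) := fun y => by simpa using max_neg_neg (0:ℝ) y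
  have heq : (fun y : ℝ => (max 0 (-y))^2) = fun y : ℝ => (min 0 y)^2 := by
    funext y; rw [key y]; ring
  have h2 : HasDerivAt (fun y : ℝ => (min 0 y)^2) (2 * max 0 (-x) * (-1)) x := by
    rw [← heq]; exact h
  convert h2 using 1
  rw [key x]; ring

lemma hasDerivAt_uTP (x : ℝ) : HasDerivAt uTP (Ud x) x := by
  have h1 := (sq_min_hasDerivAt (x + 1/2)).comp x ((hasDerivAt_id x).add_const (1/2))
  have h2 := (sq_max_hasDerivAt (x - 1/2)).comp x ((hasDerivAt_id x).sub_const (1/2))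
  have h3 := (h1.const_mul (-4 : ℝ)).add (h2.const_mul (4 : ℝ))
  have ev : uTP =ᶠ[nhds x] (fun y => -4 * ((fun y : ℝ => (min 0 y)^2) ∘ fun x : ℝ => id x + 1/2) y + 4 * ((fun y : ℝ => (max 0 y)^2) ∘ fun x : ℝ => id x - 1/2) y) := by
    filter_upwards with y
    rw [uTP_eq]; simp [Function.comp]
  refine (h3.congr_of_eventuallyEq ev).congr_deriv ?_
  unfold Ud; ring

lemma deriv_uTP : deriv uTP = Ud := funext fun x => (hasDerivAt_uTP x).deriv

lemma contUd : Continuous Ud := by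
  unfold Ud
  fun_prop

lemma uTP_m1 : uTP (-1) = -1 := by norm_num [uTP]
lemma uTP_1 : uTP 1 = 1 := by norm_num [uTP]

lemma integral_Ud (x : ℝ) : ∫ t in (-1:ℝ)..x, Ud t = uTP x + 1 := by
  rw [intervalIntegral.integral_eq_sub_of_hasDerivAt (fun t _ => hasDerivAt_uTP t)
    (contUd.intervalIntegrable _ _), uTP_m1]
  ring

lemma abs_uTP (x : ℝ) : |uTP x| = sTP x * uTP x := by
  unfold uTP sTP
  split_ifs with h1 h2
  · rw [abs_of_nonpos (by nlinarith)]; ring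
  · simp
  · rw [abs_of_nonneg (by nlinarith)]; ring

lemma sTP_abs_le (x : ℝ) : |sTP x| ≤ 1 := by
  unfold sTP; split_ifs <;> norm_num

lemma sTP_meas : Measurable sTP := by
  unfold sTP
  exact Measurable.ite measurableSet_Iic measurable_const
    (Measurable.ite measurableSet_Iic measurable_const measurable_const)

lemma contuTP : Continuous uTP :=
  continuous_iff_continuousAt.2 fun x => (hasDerivAt_uTP x).continuousAt

lemma fubini_one {h : ℝ → ℝ} {a b : ℝ} (hab : a ≤ b) (hint : IntegrableOn h (Ioc a b)) :
    ∫ t in a..b, (∫ s in a..t, h s) = ∫ s in a..b, (b - s) * h s := by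
  set μ := volume.restrict (Ioc a b) with hμ
  haveI : IsFiniteMeasure μ := by
    constructor
    rw [hμ, Measure.restrict_apply_univ, Real.volume_Ioc]
    exact ENNReal.ofReal_lt_top
  have hmeas : MeasurableSet {p : ℝ × ℝ | p.2 ≤ p.1} := measurableSet_le measurable_snd measurable_fst
  have hsnd : Integrable (fun p : ℝ × ℝ => h p.2) (μ.prod μ) := by
    have hm : AEStronglyMeasurable (fun p : ℝ × ℝ => h p.2) (μ.prod μ) :=
      hint.aestronglyMeasurable.comp_snd
    refine (integrable_prod_iff hm).2 ⟨Filter.Eventually.of_forall fun t => hint, ?_⟩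
    exact MeasureTheory.integrable_const (∫ y, ‖h y‖ ∂μ)
  have hF : Integrable (fun p : ℝ × ℝ => if p.2 ≤ p.1 then h p.2 else 0) (μ.prod μ) := by
    have : (fun p : ℝ × ℝ => if p.2 ≤ p.1 then h p.2 else 0)
        = {p : ℝ × ℝ | p.2 ≤ p.1}.indicator (fun p => h p.2) := by
      funext p; simp [Set.indicator_apply]
    rw [this]
    exact hsnd.indicator hmeas
  have swap := MeasureTheory.integral_integral_swap (f := fun t s => if s ≤ t then h s else 0)
    (μ := μ) (ν := μ) hF
  have lhs_eq : ∫ t, (∫ s, (if s ≤ t then h s else 0) ∂μ) ∂μ = ∫ t in a..b, (∫ s in a..t, h s) := by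
    rw [hμ]
    rw [intervalIntegral.integral_of_le hab]
    refine setIntegral_congr_fun measurableSet_Ioc (fun t ht => ?_)
    have h1 : ∫ s, (if s ≤ t then h s else 0) ∂μ = ∫ s in Ioc a b, (Ioc a t).indicator h s := by
      rw [hμ]
      refine setIntegral_congr_fun measurableSet_Ioc (fun s hs => ?_)
      simp only [Set.indicator_apply, Set.mem_Ioc]
      by_cases hst : s ≤ t
      · simp [hst, hs.1]
      · simp [hst]
    rw [h1, setIntegral_indicator measurableSet_Ioc,
      Set.inter_eq_self_of_subset_right (Ioc_subset_Ioc_right ht.2),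
      intervalIntegral.integral_of_le ht.1.le]
  have rhs_eq : ∫ s, (∫ t, (if s ≤ t then h s else 0) ∂μ) ∂μ = ∫ s in a..b, (b - s) * h s := by
    rw [hμ, intervalIntegral.integral_of_le hab]
    refine setIntegral_congr_fun measurableSet_Ioc (fun s hs => ?_)
    have h1 : (fun t => if s ≤ t then h s else 0) = (Ici s).indicator (fun _ => h s) := by
      funext t; simp [Set.indicator_apply, Set.mem_Ici]
    rw [h1, MeasureTheory.integral_indicator_const _ measurableSet_Ici,
      measureReal_restrict_apply measurableSet_Ici]
    have h2 : Ici s ∩ Ioc a b = Icc s b := by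
      ext t
      simp only [Set.mem_inter_iff, Set.mem_Ici, Set.mem_Ioc, Set.mem_Icc]
      constructor
      · rintro ⟨h1, _, h3⟩; exact ⟨h1, h3⟩
      · rintro ⟨h1, h2⟩; exact ⟨h1, lt_of_lt_of_le hs.1 h1, h2⟩
    rw [h2, measureReal_def, Real.volume_Icc, ENNReal.toReal_ofReal (by linarith [hs.2])]
    simp [smul_eq_mul]
  rw [← lhs_eq, ← rhs_eq] at *
  exact swap

lemma fubini_two {h : ℝ → ℝ} {a b : ℝ} (hab : a ≤ b) (hint : IntegrableOn h (Ioc a b)) :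
    ∫ t in a..b, (∫ s in t..b, h s) = ∫ s in a..b, (s - a) * h s := by
  have hii : IntervalIntegrable h volume a b :=
    (intervalIntegrable_iff_integrableOn_Ioc_of_le hab).2 hint
  have hsplit : ∀ t ∈ Icc a b, (∫ s in t..b, h s) = (∫ s in a..b, h s) - ∫ s in a..t, h s := by
    intro t ht
    have h1 : IntervalIntegrable h volume a t := hii.mono_set (by
      rw [Set.uIcc_of_le ht.1, Set.uIcc_of_le hab]; exact Icc_subset_Icc le_rfl ht.2)
    have h2 : IntervalIntegrable h volume t b := hii.mono_set (by
      rw [Set.uIcc_of_le ht.2, Set.uIcc_of_le hab]; exact Icc_subset_Icc ht.1 le_rfl)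
    rw [← intervalIntegral.integral_add_adjacent_intervals h1 h2]
    ring
  have hcont : ContinuousOn (fun t => ∫ s in a..t, h s) (Icc a b) := by
    have := intervalIntegral.continuousOn_primitive_interval' hii (by
      rw [Set.uIcc_of_le hab]; exact Set.left_mem_Icc.2 hab)
    rwa [Set.uIcc_of_le hab] at this
  have step1 : ∫ t in a..b, (∫ s in t..b, h s)
      = ∫ t in a..b, ((∫ s in a..b, h s) - ∫ s in a..t, h s) := by
    apply intervalIntegral.integral_congr
    rw [Set.uIcc_of_le hab]
    exact fun t ht => hsplit t ht
  rw [step1, intervalIntegral.integral_sub (intervalIntegrable_const)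
    (hcont.intervalIntegrable_of_Icc hab), fubini_one hab hint,
    intervalIntegral.integral_const]
  have : (b - a) • ∫ s in a..b, h s = ∫ s in a..b, (b - a) * h s := by
    rw [smul_eq_mul, ← intervalIntegral.integral_const_mul]
  rw [this, ← intervalIntegral.integral_sub
    ((hii.const_mul _)) (by
      have : IntervalIntegrable h volume a b := hii
      exact (this.continuousOn_mul (by fun_prop)))]
  apply intervalIntegral.integral_congr
  intro s _
  ring


end TwoPhaseAux


open TwoPhaseAux

/-- `uTP` is the unique minimizer of `J(v) = ∫ ((1/2)(v')² + 8|v|)` over all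
`v ∈ H¹(−1,1)` with `v(−1) = −1`, `v(1) = 1`.  An `H¹` function is encoded as an
absolutely continuous function `v` with weak derivative `g ∈ L²`. -/
theorem two_phase_1d_minimizer
    (v g : ℝ → ℝ)
    -- `v ∈ H¹(−1,1)` with weak derivative `g ∈ L²(−1,1)`
    (hg : MemLp g 2 (volume.restrict (Set.Ioo (-1:ℝ) 1)))
    (hrep : ∀ x ∈ Set.Icc (-1:ℝ) 1, v x = v (-1) + ∫ t in (-1:ℝ)..x, g t)
    -- boundary conditions
    (hbl : v (-1) = -1) (hbr : v 1 = 1) :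
    (∫ x in (-1:ℝ)..1, ((1/2) * (deriv uTP x)^2 + 8 * |uTP x|)) ≤
      (∫ x in (-1:ℝ)..1, ((1/2) * (g x)^2 + 8 * |v x|)) ∧
    ((∫ x in (-1:ℝ)..1, ((1/2) * (g x)^2 + 8 * |v x|)) =
      (∫ x in (-1:ℝ)..1, ((1/2) * (deriv uTP x)^2 + 8 * |uTP x|)) →
      ∀ x ∈ Set.Icc (-1:ℝ) 1, v x = uTP x) := by
  have h01 : (-1:ℝ) ≤ 1 := by norm_num
  haveI hfin : IsFiniteMeasure (volume.restrict (Set.Ioo (-1:ℝ) 1)) := by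
    constructor
    rw [Measure.restrict_apply_univ, Real.volume_Ioo]
    exact ENNReal.ofReal_lt_top
  have hgInt : IntegrableOn g (Set.Ioo (-1:ℝ) 1) := hg.integrable one_le_two
  have hgIoc : IntegrableOn g (Set.Ioc (-1:ℝ) 1) := by
    rwa [integrableOn_Ioc_iff_integrableOn_Ioo]
  have hgiv : IntervalIntegrable g volume (-1) 1 :=
    (intervalIntegrable_iff_integrableOn_Ioc_of_le h01).2 hgIoc
  have hg2Int : IntegrableOn (fun x => (g x)^2) (Set.Ioo (-1:ℝ) 1) := hg.integrable_sq
  have hg2Ioc : IntegrableOn (fun x => (g x)^2) (Set.Ioc (-1:ℝ) 1) := by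
    rwa [integrableOn_Ioc_iff_integrableOn_Ioo]
  have hg2iv : IntervalIntegrable (fun x => (g x)^2) volume (-1) 1 :=
    (intervalIntegrable_iff_integrableOn_Ioc_of_le h01).2 hg2Ioc
  have hUc : Continuous Ud := contUd
  set hfun : ℝ → ℝ := fun t => g t - Ud t with hhfun
  set w : ℝ → ℝ := fun x => ∫ t in (-1:ℝ)..x, hfun t with hwdef
  have hhiv : IntervalIntegrable hfun volume (-1) 1 := hgiv.sub (hUc.intervalIntegrable _ _)
  have hhIoc : IntegrableOn hfun (Set.Ioc (-1:ℝ) 1) :=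
    (intervalIntegrable_iff_integrableOn_Ioc_of_le h01).1 hhiv
  have hwcont : ContinuousOn w (Set.Icc (-1:ℝ) 1) := by
    have := intervalIntegral.continuousOn_primitive_interval' hhiv
      (by rw [Set.uIcc_of_le h01]; exact Set.left_mem_Icc.2 h01)
    rw [Set.uIcc_of_le h01] at this
    exact this
  have hvcont : ContinuousOn v (Set.Icc (-1:ℝ) 1) := by
    have hVc : ContinuousOn (fun x => v (-1) + ∫ t in (-1:ℝ)..x, g t) (Set.Icc (-1:ℝ) 1) := by
      refine continuousOn_const.add ?_
      have := intervalIntegral.continuousOn_primitive_interval' hgiv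
        (by rw [Set.uIcc_of_le h01]; exact Set.left_mem_Icc.2 h01)
      rwa [Set.uIcc_of_le h01] at this
    exact hVc.congr (fun x hx => hrep x hx)
  have hvIcc : IntegrableOn v (Set.Icc (-1:ℝ) 1) := hvcont.integrableOn_Icc
  have hvIoc : IntegrableOn v (Set.Ioc (-1:ℝ) 1) := hvIcc.mono_set Set.Ioc_subset_Icc_self
  have hviv : IntervalIntegrable v volume (-1) 1 :=
    (intervalIntegrable_iff_integrableOn_Ioc_of_le h01).2 hvIoc
  have hwIcc : IntegrableOn w (Set.Icc (-1:ℝ) 1) := hwcont.integrableOn_Icc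
  have hsbd : ∃ C, ∀ x, ‖sTP x‖ ≤ C := ⟨1, fun x => by rw [Real.norm_eq_abs]; exact sTP_abs_le x⟩
  have hsviv : IntervalIntegrable (fun x => sTP x * v x) volume (-1) 1 :=
    (intervalIntegrable_iff_integrableOn_Ioc_of_le h01).2
      (hvIoc.bdd_mul sTP_meas.aestronglyMeasurable (c := 1) (Filter.Eventually.of_forall fun x => by rw [Real.norm_eq_abs]; exact sTP_abs_le x))
  have hswiv : IntervalIntegrable (fun x => sTP x * w x) volume (-1) 1 :=
    (intervalIntegrable_iff_integrableOn_Ioc_of_le h01).2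
      ((hwIcc.mono_set Set.Ioc_subset_Icc_self).bdd_mul sTP_meas.aestronglyMeasurable (c := 1) (Filter.Eventually.of_forall fun x => by rw [Real.norm_eq_abs]; exact sTP_abs_le x))
  have haviv : IntervalIntegrable (fun x => |v x|) volume (-1) 1 := hviv.abs
  -- w = v - uTP on Icc
  have hweq : ∀ x ∈ Set.Icc (-1:ℝ) 1, w x = v x - uTP x := by
    intro x hx
    have hgx : IntervalIntegrable g volume (-1) x := hgiv.mono_set
      (by rw [Set.uIcc_of_le hx.1, Set.uIcc_of_le h01]; exact Set.Icc_subset_Icc le_rfl hx.2)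
    simp only [hwdef, hhfun]
    rw [intervalIntegral.integral_sub hgx (hUc.intervalIntegrable _ _), integral_Ud,
      hrep x hx, hbl]
    ring
  -- pointwise identity
  have ptwise : ∀ x ∈ Set.Icc (-1:ℝ) 1,
      (1/2) * (g x)^2 + 8 * |v x| =
        (((1/2) * (Ud x)^2 + 8 * |uTP x|)
        + ((1/2) * (hfun x)^2 + 8 * (|v x| - sTP x * v x)))
        + (Ud x * hfun x + 8 * (sTP x * w x)) := by
    intro x hx
    rw [abs_uTP, hweq x hx]
    simp only [hhfun]
    ring
  -- integrability of the pieces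
  have IA : IntervalIntegrable (fun x => (1/2) * (Ud x)^2 + 8 * |uTP x|) volume (-1) 1 :=
    ((continuous_const.mul (hUc.pow 2)).add (continuous_const.mul contuTP.abs)).intervalIntegrable _ _
  have hUg : IntervalIntegrable (fun x => g x * Ud x) volume (-1) 1 :=
    hgiv.mul_continuousOn hUc.continuousOn
  have Ih2 : IntervalIntegrable (fun x => (hfun x)^2) volume (-1) 1 := by
    have heq : (fun x => (hfun x)^2) = fun x => (g x)^2 - 2*(g x * Ud x) + (Ud x)^2 := by
      funext x; simp only [hhfun]; ring
    rw [heq]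
    exact (hg2iv.sub (hUg.const_mul 2)).add ((hUc.pow 2).intervalIntegrable _ _)
  have Ib1 : IntervalIntegrable (fun x => (1/2) * (hfun x)^2) volume (-1) 1 := Ih2.const_mul _
  have Ib2 : IntervalIntegrable (fun x => 8 * (|v x| - sTP x * v x)) volume (-1) 1 :=
    (haviv.sub hsviv).const_mul 8
  have IB : IntervalIntegrable
      (fun x => (1/2) * (hfun x)^2 + 8 * (|v x| - sTP x * v x)) volume (-1) 1 := Ib1.add Ib2
  have IZ : IntervalIntegrable (fun x => Ud x * hfun x + 8 * (sTP x * w x)) volume (-1) 1 :=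
    (hhiv.continuousOn_mul hUc.continuousOn).add (hswiv.const_mul 8)
  -- splitting of the target integral
  have hsplit : (∫ x in (-1:ℝ)..1, ((1/2) * (g x)^2 + 8 * |v x|))
      = (∫ x in (-1:ℝ)..1, ((1/2) * (Ud x)^2 + 8 * |uTP x|))
        + (∫ x in (-1:ℝ)..1, ((1/2) * (hfun x)^2 + 8 * (|v x| - sTP x * v x)))
        + (∫ x in (-1:ℝ)..1, (Ud x * hfun x + 8 * (sTP x * w x))) := by
    rw [← intervalIntegral.integral_add IA IB, ← intervalIntegral.integral_add (IA.add IB) IZ]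
    apply intervalIntegral.integral_congr
    rw [Set.uIcc_of_le h01]
    exact ptwise
  -- the linear term vanishes
  have hw1 : w 1 = 0 := by
    simp only [hwdef, hhfun]
    rw [intervalIntegral.integral_sub hgiv (hUc.intervalIntegrable _ _), integral_Ud, uTP_1]
    have h2 := hrep 1 (by norm_num : (1:ℝ) ∈ Set.Icc (-1:ℝ) 1)
    rw [hbr, hbl] at h2
    linarith
  have hZ : (∫ x in (-1:ℝ)..1, (Ud x * hfun x + 8 * (sTP x * w x))) = 0 := by
    have m1 : IntervalIntegrable (fun x => Ud x * hfun x + 8 * (sTP x * w x)) volume (-1) (-(1/2)) :=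
      IZ.mono_set (by rw [Set.uIcc_of_le (by norm_num : (-1:ℝ) ≤ -(1/2)), Set.uIcc_of_le h01]
                      exact Set.Icc_subset_Icc le_rfl (by norm_num))
    have m2 : IntervalIntegrable (fun x => Ud x * hfun x + 8 * (sTP x * w x)) volume (-(1/2)) (1/2) :=
      IZ.mono_set (by rw [Set.uIcc_of_le (by norm_num : (-(1/2):ℝ) ≤ 1/2), Set.uIcc_of_le h01]
                      exact Set.Icc_subset_Icc (by norm_num) (by norm_num))
    have m3 : IntervalIntegrable (fun x => Ud x * hfun x + 8 * (sTP x * w x)) volume (1/2) 1 :=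
      IZ.mono_set (by rw [Set.uIcc_of_le (by norm_num : (1/2:ℝ) ≤ 1), Set.uIcc_of_le h01]
                      exact Set.Icc_subset_Icc (by norm_num) le_rfl)
    rw [← intervalIntegral.integral_add_adjacent_intervals (m1.trans m2) m3,
        ← intervalIntegral.integral_add_adjacent_intervals m1 m2]
    -- left piece
    have hZ1 : (∫ x in (-1:ℝ)..(-(1/2)), (Ud x * hfun x + 8 * (sTP x * w x))) = 0 := by
      have hcong : Set.EqOn (fun x => Ud x * hfun x + 8 * (sTP x * w x))
          (fun x => (-8*(x + 1/2)) * hfun x + (-8) * w x) (Set.uIcc (-1:ℝ) (-(1/2))) := by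
        intro x hx
        rw [Set.uIcc_of_le (by norm_num)] at hx
        have hU : Ud x = -8*(x+1/2) := by
          unfold Ud
          rw [min_eq_right (by linarith [hx.2]), max_eq_left (by linarith [hx.2])]; ring
        have hs : sTP x = -1 := by unfold sTP; rw [if_pos hx.2]
        simp only
        rw [hU, hs]; ring
      rw [intervalIntegral.integral_congr hcong]
      have hfint : IntegrableOn hfun (Set.Ioc (-1:ℝ) (-(1/2))) :=
        hhIoc.mono_set (Set.Ioc_subset_Ioc le_rfl (by norm_num))
      have h1 : IntervalIntegrable (fun x => (-8*(x+1/2)) * hfun x) volume (-1) (-(1/2)) := by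
        have hsub : IntervalIntegrable hfun volume (-1) (-(1/2)) :=
          (intervalIntegrable_iff_integrableOn_Ioc_of_le (by norm_num)).2 hfint
        exact hsub.continuousOn_mul (by fun_prop)
      have h2 : IntervalIntegrable w volume (-1) (-(1/2)) :=
        (hwcont.mono (Set.Icc_subset_Icc le_rfl (by norm_num))).intervalIntegrable_of_Icc (by norm_num)
      rw [intervalIntegral.integral_add h1 (h2.const_mul _), intervalIntegral.integral_const_mul]
      have hfub : (∫ x in (-1:ℝ)..(-(1/2)), w x) = ∫ s in (-1:ℝ)..(-(1/2)), ((-(1/2)) - s) * hfun s := by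
        simp only [hwdef]
        exact fubini_one (by norm_num) hfint
      rw [hfub]
      have hc : (∫ x in (-1:ℝ)..(-(1/2)), (-8*(x+1/2)) * hfun x)
          = 8 * ∫ s in (-1:ℝ)..(-(1/2)), ((-(1/2)) - s) * hfun s := by
        rw [← intervalIntegral.integral_const_mul]
        apply intervalIntegral.integral_congr
        intro s _
        simp only
        ring
      rw [hc]
      ring
    -- middle piece
    have hZ2 : (∫ x in (-(1/2):ℝ)..(1/2), (Ud x * hfun x + 8 * (sTP x * w x))) = 0 := by
      have : ∀ᵐ x ∂(volume : Measure ℝ), x ∈ Set.uIoc (-(1/2):ℝ) (1/2) →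
          Ud x * hfun x + 8 * (sTP x * w x) = (0 : ℝ) := by
        refine Filter.Eventually.of_forall (fun x hx => ?_)
        rw [Set.uIoc_of_le (by norm_num : (-(1/2):ℝ) ≤ 1/2)] at hx
        have hU0 : Ud x = 0 := by
          unfold Ud
          rw [min_eq_left (by linarith [hx.1]), max_eq_left (by linarith [hx.2])]; ring
        have hs0 : sTP x = 0 := by
          unfold sTP
          rw [if_neg (by linarith [hx.1] : ¬ x ≤ -(1/2)), if_pos hx.2]
        rw [hU0, hs0]; ring
      rw [intervalIntegral.integral_congr_ae this]
      simp
    -- right piece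
    have hZ3 : (∫ x in (1/2:ℝ)..1, (Ud x * hfun x + 8 * (sTP x * w x))) = 0 := by
      have hcong : ∀ᵐ x ∂(volume : Measure ℝ), x ∈ Set.uIoc (1/2:ℝ) 1 →
          Ud x * hfun x + 8 * (sTP x * w x) = (8*(x - 1/2)) * hfun x + 8 * w x := by
        refine Filter.Eventually.of_forall (fun x hx => ?_)
        rw [Set.uIoc_of_le (by norm_num : (1/2:ℝ) ≤ 1)] at hx
        have hU : Ud x = 8*(x - 1/2) := by
          unfold Ud
          rw [min_eq_left (by linarith [hx.1]), max_eq_right (by linarith [hx.1])]; ring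
        have hs : sTP x = 1 := by
          unfold sTP
          rw [if_neg (by linarith [hx.1] : ¬ x ≤ -(1/2)), if_neg (by linarith [hx.1] : ¬ x ≤ 1/2)]
        rw [hU, hs]; ring
      rw [intervalIntegral.integral_congr_ae hcong]
      have hfint : IntegrableOn hfun (Set.Ioc (1/2:ℝ) 1) :=
        hhIoc.mono_set (Set.Ioc_subset_Ioc (by norm_num) le_rfl)
      have h1 : IntervalIntegrable (fun x => (8*(x - 1/2)) * hfun x) volume (1/2) 1 := by
        have hsub : IntervalIntegrable hfun volume (1/2) 1 :=
          (intervalIntegrable_iff_integrableOn_Ioc_of_le (by norm_num)).2 hfint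
        exact hsub.continuousOn_mul (by fun_prop)
      have h2 : IntervalIntegrable w volume (1/2) 1 :=
        (hwcont.mono (Set.Icc_subset_Icc (by norm_num) le_rfl)).intervalIntegrable_of_Icc (by norm_num)
      rw [intervalIntegral.integral_add h1 (h2.const_mul _), intervalIntegral.integral_const_mul]
      -- express ∫ w over [1/2,1] via the tail integrals
      have hwt : ∀ t ∈ Set.Icc (1/2:ℝ) 1, w t = -(∫ s in t..1, hfun s) := by
        intro t ht
        have ha : IntervalIntegrable hfun volume (-1) t := hhiv.mono_set
          (by rw [Set.uIcc_of_le (by linarith [ht.1] : (-1:ℝ) ≤ t), Set.uIcc_of_le h01]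
              exact Set.Icc_subset_Icc le_rfl ht.2)
        have hb : IntervalIntegrable hfun volume t 1 := hhiv.mono_set
          (by rw [Set.uIcc_of_le ht.2, Set.uIcc_of_le h01]
              exact Set.Icc_subset_Icc (by linarith [ht.1]) le_rfl)
        have hadd := intervalIntegral.integral_add_adjacent_intervals ha hb
        have hw1' : (∫ s in (-1:ℝ)..1, hfun s) = 0 := hw1
        have hwt' : w t = ∫ s in (-1:ℝ)..t, hfun s := rfl
        rw [hwt']
        linarith [hadd, hw1']
      have hwint : (∫ x in (1/2:ℝ)..1, w x) = -(∫ s in (1/2:ℝ)..1, (s - 1/2) * hfun s) := by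
        have hcg : Set.EqOn w (fun t => -(∫ s in t..1, hfun s)) (Set.uIcc (1/2:ℝ) 1) := by
          intro t ht
          rw [Set.uIcc_of_le (by norm_num : (1/2:ℝ) ≤ 1)] at ht
          exact hwt t ht
        rw [intervalIntegral.integral_congr hcg, intervalIntegral.integral_neg,
          fubini_two (by norm_num) hfint]
      rw [hwint]
      have hc : (∫ x in (1/2:ℝ)..1, (8*(x - 1/2)) * hfun x)
          = 8 * ∫ s in (1/2:ℝ)..1, (s - 1/2) * hfun s := by
        rw [← intervalIntegral.integral_const_mul]
        apply intervalIntegral.integral_congr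
        intro s _
        simp only
        ring
      rw [hc]
      ring
    rw [hZ1, hZ2, hZ3]
    ring
  -- nonnegativity of the quadratic remainder
  have hBsplit : (∫ x in (-1:ℝ)..1, ((1/2) * (hfun x)^2 + 8 * (|v x| - sTP x * v x)))
      = (∫ x in (-1:ℝ)..1, (1/2) * (hfun x)^2)
        + (∫ x in (-1:ℝ)..1, 8 * (|v x| - sTP x * v x)) :=
    intervalIntegral.integral_add Ib1 Ib2
  have hBnn1 : 0 ≤ ∫ x in (-1:ℝ)..1, (1/2) * (hfun x)^2 :=
    intervalIntegral.integral_nonneg h01 (fun x _ => by positivity)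
  have hBnn2 : 0 ≤ ∫ x in (-1:ℝ)..1, 8 * (|v x| - sTP x * v x) := by
    refine intervalIntegral.integral_nonneg h01 (fun x _ => ?_)
    have h1 : sTP x * v x ≤ |v x| := by
      calc sTP x * v x ≤ |sTP x * v x| := le_abs_self _
        _ = |sTP x| * |v x| := abs_mul _ _
        _ ≤ 1 * |v x| := mul_le_mul_of_nonneg_right (sTP_abs_le x) (abs_nonneg _)
        _ = |v x| := one_mul _
    linarith
  have hJu : (∫ x in (-1:ℝ)..1, ((1/2) * (deriv uTP x)^2 + 8 * |uTP x|))
      = (∫ x in (-1:ℝ)..1, ((1/2) * (Ud x)^2 + 8 * |uTP x|)) := by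
    simp only [deriv_uTP]
  constructor
  · rw [hJu, hsplit, hZ, hBsplit]
    linarith
  · intro heq x hx
    rw [hJu] at heq
    rw [hsplit, hZ, hBsplit] at heq
    have hb1z : (∫ x in (-1:ℝ)..1, (1/2) * (hfun x)^2) = 0 := by linarith
    have hae : ∀ᵐ t ∂(volume.restrict (Set.Ioc (-1:ℝ) 1)), hfun t = 0 := by
      have h0 := (intervalIntegral.integral_eq_zero_iff_of_le_of_nonneg_ae h01
        (Filter.Eventually.of_forall (fun t => by positivity)) Ib1).1 hb1z
      filter_upwards [h0] with t ht0
      have h2 : (1/2) * (hfun t)^2 = 0 := ht0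
      have h3 : (hfun t)^2 = 0 := by linear_combination 2 * h2
      exact pow_eq_zero_iff (by norm_num : 2 ≠ 0) |>.mp h3
    have hzero : (∫ t in (-1:ℝ)..x, hfun t) = 0 := by
      rw [intervalIntegral.integral_of_le hx.1]
      refine MeasureTheory.integral_eq_zero_of_ae ?_
      exact ae_restrict_of_ae_restrict_of_subset (Set.Ioc_subset_Ioc le_rfl hx.2) hae
    have hfx : IntervalIntegrable hfun volume (-1) x := hhiv.mono_set
      (by rw [Set.uIcc_of_le hx.1, Set.uIcc_of_le h01]; exact Set.Icc_subset_Icc le_rfl hx.2)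
    have hgdec : (∫ t in (-1:ℝ)..x, g t)
        = (∫ t in (-1:ℝ)..x, hfun t) + ∫ t in (-1:ℝ)..x, Ud t := by
      rw [← intervalIntegral.integral_add hfx (hUc.intervalIntegrable _ _)]
      apply intervalIntegral.integral_congr
      intro t _
      simp only [hhfun]
      ring
    rw [hrep x hx, hbl, hgdec, hzero, integral_Ud]
    ring
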